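/- A two-qubit unitary U ∈ SU(4) is a phase carrier if and only if the elementwise absolute value of U is a permutation matrix and the induced permutation π : ℤ₂ × ℤ₂ → ℤ₂ × ℤ₂ satisfies π(ā, b̄) = (overline of π(a,b)) for all a, b ∈ ℤ₂, where the bar denotes flipping both bits. -/

import Mathlib

open Complex Matrix Kronecker

noncomputable def Zgate (θ : ℝ) : Matrix (Fin 2) (Fin 2) ℂ :=
  !![exp (θ / 2 * I), 0; 0, exp (-(θ / 2) * I)]

/-- A two-qubit gate is a phase carrier if `Z` rotations can be carried across it. -/
def IsPhaseCarrier (U : Matrix (Fin 2 × Fin 2) (Fin 2 × Fin 2) ℂ) : Prop :=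
  ∀ θ₀ θ₁ : ℝ, ∃ φ₀ φ₁ : ℝ, U * (Zgate θ₀ ⊗ₖ Zgate θ₁) = (Zgate φ₀ ⊗ₖ Zgate φ₁) * U

noncomputable def sg : Fin 2 → ℝ := fun a => if a = 0 then 1 else -1

noncomputable def dd (j : Fin 2 × Fin 2) (θ₀ θ₁ : ℝ) : ℂ :=
  Complex.exp ((((sg j.1) * θ₀ + (sg j.2) * θ₁) / 2 : ℝ) * I)

noncomputable def mon (u v : ℂ) (i : Fin 2 × Fin 2) : ℂ :=
  (if i.1 = 0 then u else u⁻¹) * (if i.2 = 0 then v else v⁻¹)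

lemma kron_eq (θ₀ θ₁ : ℝ) :
    (Zgate θ₀ ⊗ₖ Zgate θ₁) = Matrix.diagonal (fun i => dd i θ₀ θ₁) := by
  ext ⟨a, b⟩ ⟨c, d⟩
  fin_cases a <;> fin_cases b <;> fin_cases c <;> fin_cases d <;>
    simp [Zgate, dd, sg, Matrix.kroneckerMap_apply, Matrix.diagonal, ← Complex.exp_add] <;>
    first
      | (congr 1 ; push_cast ; ring1)
      | (rw [if_neg (by decide)])
      | skip

lemma carrier_iff' (U : Matrix (Fin 2 × Fin 2) (Fin 2 × Fin 2) ℂ) :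
    IsPhaseCarrier U ↔
      ∀ θ₀ θ₁ : ℝ, ∃ φ₀ φ₁ : ℝ, ∀ i j, U i j * dd j θ₀ θ₁ = dd i φ₀ φ₁ * U i j := by
  unfold IsPhaseCarrier
  simp_rw [kron_eq]
  constructor <;> intro h θ₀ θ₁ <;> obtain ⟨φ₀, φ₁, h'⟩ := h θ₀ θ₁ <;> refine ⟨φ₀, φ₁, ?_⟩
  · intro i j
    have := congrFun (congrFun h' i) j
    simpa [Matrix.mul_diagonal, Matrix.diagonal_mul] using this
  · ext i j
    simp only [Matrix.mul_diagonal, Matrix.diagonal_mul]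
    exact h' i j

lemma dd_eq_mon (i : Fin 2 × Fin 2) (θ₀ θ₁ : ℝ) :
    dd i θ₀ θ₁ = mon (Complex.exp ((θ₀ / 2 : ℝ) * I)) (Complex.exp ((θ₁ / 2 : ℝ) * I)) i := by
  obtain ⟨a, b⟩ := i
  fin_cases a <;> fin_cases b <;> simp only [dd, sg, mon] <;> norm_num <;>
    simp only [← Complex.exp_neg, ← Complex.exp_add] <;> congr 1 <;> ring

lemma mon_mul_flip (u v : ℂ) (hu : u ≠ 0) (hv : v ≠ 0) (i : Fin 2 × Fin 2) :
    mon u v i * mon u v (i.1 + 1, i.2 + 1) = 1 := by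
  obtain ⟨a, b⟩ := i
  fin_cases a <;> fin_cases b <;> simp [mon] <;> field_simp

lemma ddpi (j : Fin 2 × Fin 2) :
    dd j Real.pi Real.pi = if j = (0, 1) ∨ j = (1, 0) then 1 else -1 := by
  have hm : Complex.exp (-(↑Real.pi * I)) = -1 := by
    rw [Complex.exp_neg, Complex.exp_pi_mul_I]; norm_num
  obtain ⟨a, b⟩ := j
  fin_cases a <;> fin_cases b <;> simp only [dd, sg] <;> norm_num [hm] <;>
    rw [if_neg (by decide)]

lemma mon_inj (u v : ℂ) (hu : u ≠ 0) (hv : v ≠ 0) (h1 : u ^ 2 ≠ 1) (h2 : v ^ 2 ≠ 1)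
    (h3 : u ^ 2 * v ^ 2 ≠ 1) (h4 : u ^ 2 ≠ v ^ 2) (j k : Fin 2 × Fin 2)
    (h : mon u v j = mon u v k) : j = k := by
  obtain ⟨a, b⟩ := j; obtain ⟨c, d⟩ := k
  fin_cases a <;> fin_cases b <;> fin_cases c <;> fin_cases d <;> first
    | rfl
    | (exfalso
       simp only [mon] at h
       norm_num at h
       field_simp at h
       first
         | exact h1 (by linear_combination h)
         | exact h1 (by linear_combination -h)
         | exact h2 (by linear_combination h)
         | exact h2 (by linear_combination -h)
         | exact h3 (by linear_combination h)
         | exact h3 (by linear_combination -h)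
         | exact h4 (by linear_combination h)
         | exact h4 (by linear_combination -h)
         | (rcases h with h | h
            · exact h2 (by linear_combination h)
            · exact hu h)
         | (rcases h with h | h
            · exact h2 (by linear_combination -h)
            · exact hu h)
         | (rcases h with h | h
            · exact h1 (by linear_combination h)
            · exact hv h)
         | (rcases h with h | h
            · exact h1 (by linear_combination -h)
            · exact hv h)
         | exact h2 (mul_left_cancel₀ (pow_ne_zero 2 hu) (by linear_combination h))
         | exact h2 (mul_left_cancel₀ (pow_ne_zero 2 hu) (by linear_combination -h))
         | exact h1 (mul_left_cancel₀ (pow_ne_zero 2 hv) (by linear_combination h))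
         | exact h1 (mul_left_cancel₀ (pow_ne_zero 2 hv) (by linear_combination -h)))

lemma exp_half_pi_eq_I : Complex.exp ((Real.pi / 2 : ℝ) * I) = I := by
  rw [Complex.exp_mul_I]
  rw [show ((Real.pi / 2 : ℝ) : ℂ) = ((Real.pi / 2 : ℝ) : ℂ) from rfl]
  rw [← Complex.ofReal_cos, ← Complex.ofReal_sin, Real.cos_pi_div_two, Real.sin_pi_div_two]
  norm_num

lemma dd_inj {j k : Fin 2 × Fin 2}
    (h : dd j Real.pi (Real.pi / 2) = dd k Real.pi (Real.pi / 2)) : j = k := by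
  rw [dd_eq_mon, dd_eq_mon] at h
  set u := Complex.exp ((Real.pi / 2 : ℝ) * I) with hu_def
  set v := Complex.exp ((Real.pi / 2 / 2 : ℝ) * I) with hv_def
  have hu0 : u ≠ 0 := Complex.exp_ne_zero _
  have hv0 : v ≠ 0 := Complex.exp_ne_zero _
  have hu : u = I := exp_half_pi_eq_I
  have hv2 : v ^ 2 = I := by
    rw [hv_def, sq, ← Complex.exp_add]
    rw [show ((Real.pi / 2 / 2 : ℝ) : ℂ) * I + ((Real.pi / 2 / 2 : ℝ) : ℂ) * I
        = ((Real.pi / 2 : ℝ) : ℂ) * I by push_cast; ring]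
    exact exp_half_pi_eq_I
  refine mon_inj u v hu0 hv0 ?_ ?_ ?_ ?_ j k h
  · rw [hu]; norm_num [Complex.ext_iff]
  · rw [hv2]; norm_num [Complex.ext_iff]
  · rw [hu, hv2]; norm_num [Complex.ext_iff]
  · rw [hu, hv2]; norm_num [Complex.ext_iff]

def flipP (x : Fin 2 × Fin 2) : Fin 2 × Fin 2 := (x.1 + 1, x.2 + 1)

lemma flip_ne (x : Fin 2 × Fin 2) : (x.1 + 1, x.2 + 1) ≠ x := by
  obtain ⟨a, b⟩ := x
  fin_cases a <;> fin_cases b <;> decide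

set_option maxHeartbeats 2000000 in
theorem phase_carrier_iff (U : Matrix (Fin 2 × Fin 2) (Fin 2 × Fin 2) ℂ)
    (hU : U ∈ Matrix.specialUnitaryGroup (Fin 2 × Fin 2) ℂ) :
    IsPhaseCarrier U ↔
      ∃ π : Equiv.Perm (Fin 2 × Fin 2),
        (∀ i j : Fin 2 × Fin 2, ‖U i j‖ = if i = π j then 1 else 0) ∧
        (∀ a b : Fin 2, π (a + 1, b + 1) = ((π (a, b)).1 + 1, (π (a, b)).2 + 1)) := by
  rw [carrier_iff' U]
  have hUu : U * U.conjTranspose = 1 := by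
    have := (Matrix.mem_specialUnitaryGroup_iff.mp hU).1
    rw [Matrix.mem_unitaryGroup_iff] at this
    simpa [Matrix.star_eq_conjTranspose] using this
  constructor
  · intro hcar
    obtain ⟨φ₀, φ₁, h⟩ := hcar Real.pi (Real.pi / 2)
    have hrow : ∀ i j k, U i j ≠ 0 → U i k ≠ 0 → j = k := by
      intro i j k hj hk
      apply dd_inj (j := j) (k := k)
      have e1 : dd j Real.pi (Real.pi / 2) = dd i φ₀ φ₁ :=
        mul_left_cancel₀ hj ((h i j).trans (mul_comm _ _))
      have e2 : dd k Real.pi (Real.pi / 2) = dd i φ₀ φ₁ :=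
        mul_left_cancel₀ hk ((h i k).trans (mul_comm _ _))
      rw [e1, e2]
    have hrowsum : ∀ i, ∑ j, U i j * (starRingEnd ℂ) (U i j) = 1 := by
      intro i
      have := congrFun (congrFun hUu i) i
      simpa [Matrix.mul_apply, Matrix.conjTranspose_apply, Matrix.one_apply] using this
    have hex : ∀ i, ∃ j, U i j ≠ 0 := by
      intro i
      by_contra hc
      push_neg at hc
      have h1 := hrowsum i
      simp [hc] at h1
    choose f hf using hex
    have hfval : ∀ i j, j ≠ f i → U i j = 0 := by
      intro i j hne
      by_contra h0
      exact hne (hrow i j (f i) h0 (hf i))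
    have hfinj : Function.Injective f := by
      intro i i' he
      by_contra hne
      have h00 := congrFun (congrFun hUu i) i'
      rw [Matrix.mul_apply] at h00
      rw [Finset.sum_eq_single (f i)
        (fun k _ hk => by rw [hfval i k hk]; ring)
        (fun hm => absurd (Finset.mem_univ _) hm)] at h00
      rw [Matrix.one_apply_ne hne] at h00
      have hterm : U i (f i) * U.conjTranspose (f i) i' ≠ 0 := by
        apply mul_ne_zero (hf i)
        rw [Matrix.conjTranspose_apply]
        simpa using (he ▸ hf i' : U i' (f i) ≠ 0)
      exact hterm h00
    have hbij : Function.Bijective f := (Finite.injective_iff_bijective).mp hfinj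
    let e := Equiv.ofBijective f hbij
    have habs : ∀ i j, ‖U i j‖ = if i = e.symm j then 1 else 0 := by
      intro i j
      by_cases hij : i = e.symm j
      · rw [if_pos hij]
        subst hij
        have hfj : f (e.symm j) = j := e.apply_symm_apply j
        have h1 := hrowsum (e.symm j)
        rw [Finset.sum_eq_single j
          (fun k _ hk => by rw [hfval _ k (by rw [hfj]; exact hk)]; ring)
          (fun hm => absurd (Finset.mem_univ _) hm)] at h1
        rw [Complex.mul_conj] at h1
        have h2 : Complex.normSq (U (e.symm j) j) = 1 := by exact_mod_cast h1
        have h3 : ‖U (e.symm j) j‖ ^ 2 = 1 := by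
          rw [← Complex.sq_norm] at h2; exact h2
        have h4 := norm_nonneg (U (e.symm j) j)
        nlinarith [h3, h4]
      · rw [if_neg hij]
        rw [hfval i j (fun hh => hij ((Equiv.symm_apply_eq e).mpr hh).symm)]
        simp
    refine ⟨e.symm, habs, ?_⟩
    obtain ⟨ψ₀, ψ₁, h2⟩ := hcar Real.pi Real.pi
    set u := Complex.exp ((ψ₀ / 2 : ℝ) * I) with hu_def
    set v := Complex.exp ((ψ₁ / 2 : ℝ) * I) with hv_def
    have hu0 : u ≠ 0 := Complex.exp_ne_zero _
    have hv0 : v ≠ 0 := Complex.exp_ne_zero _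
    have key : ∀ j, mon u v (e.symm j) = dd j Real.pi Real.pi := by
      intro j
      have hUj : U (e.symm j) j ≠ 0 := by
        intro h0
        have hx := habs (e.symm j) j
        rw [if_pos rfl, h0] at hx
        simpa using hx
      have hq : dd j Real.pi Real.pi = dd (e.symm j) ψ₀ ψ₁ :=
        mul_left_cancel₀ hUj ((h2 (e.symm j) j).trans (mul_comm _ _))
      exact (dd_eq_mon _ _ _).symm.trans hq.symm
    have main : ∀ j : Fin 2 × Fin 2,
        e.symm ((j.1 + 1, j.2 + 1)) = ((e.symm j).1 + 1, (e.symm j).2 + 1) := by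
      intro j
      obtain ⟨j', hj'⟩ : ∃ j', e.symm j' = ((e.symm j).1 + 1, (e.symm j).2 + 1) :=
        ⟨e ((e.symm j).1 + 1, (e.symm j).2 + 1), Equiv.symm_apply_apply _ _⟩
      have hprod : dd j Real.pi Real.pi * dd j' Real.pi Real.pi = 1 := by
        rw [← key j, ← key j', hj']
        exact mon_mul_flip u v hu0 hv0 (e.symm j)
      have hne : j ≠ j' := by
        rintro rfl
        exact flip_ne (e.symm j) hj'.symm
      have hj'val : j' = (j.1 + 1, j.2 + 1) := by
        rw [ddpi, ddpi] at hprod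
        obtain ⟨a, b⟩ := j; obtain ⟨c, d⟩ := j'
        fin_cases a <;> fin_cases b <;> fin_cases c <;> fin_cases d <;>
          first
            | rfl
            | (exact absurd rfl hne)
            | (exfalso; norm_num [Prod.ext_iff] at hprod)
            | (exfalso; simp at hprod)
      rw [← hj'val, hj']
    intro a b
    exact main (a, b)
  · rintro ⟨π, habs, hflip⟩ θ₀ θ₁
    have hzero : ∀ i j, i ≠ π j → U i j = 0 := by
      intro i j hne
      have := habs i j
      rw [if_neg hne] at this
      exact norm_eq_zero.mp this
    suffices hdd : ∃ φ₀ φ₁ : ℝ, ∀ j, dd (π j) φ₀ φ₁ = dd j θ₀ θ₁ by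
      obtain ⟨φ₀, φ₁, hdd⟩ := hdd
      refine ⟨φ₀, φ₁, fun i j => ?_⟩
      by_cases hij : i = π j
      · subst hij; rw [hdd j]; ring
      · rw [hzero i j hij]; ring
    have hmem : ∀ x : Fin 2 × Fin 2, x = (0, 0) ∨ x = (0, 1) ∨ x = (1, 0) ∨ x = (1, 1) := by
      decide
    have hp11 : π (1, 1) = flipP (π (0, 0)) := by
      have := hflip 0 0
      norm_num at this
      exact this
    have hp10 : π (1, 0) = flipP (π (0, 1)) := by
      have := hflip 0 1
      norm_num at this
      exact this
    rcases hmem (π (0, 0)) with hq | hq | hq | hq <;>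
      rcases hmem (π (0, 1)) with hr | hr | hr | hr <;>
      [skip; skip; skip; skip; skip; skip; skip; skip; skip; skip; skip; skip; skip; skip;
       skip; skip] <;>
      (have h11 := hp11.trans (congrArg flipP hq)) <;>
      (have h10 := hp10.trans (congrArg flipP hr)) <;>
      first
        | exact absurd (π.injective (hq.trans hr.symm)) (by decide)
        | exact absurd (π.injective (hr.trans (h11.trans (by decide)).symm)) (by decide)
        | (refine ⟨θ₀, θ₁, fun j => ?_⟩
           rcases hmem j with rfl | rfl | rfl | rfl <;>
             [rw [hq]; rw [hr]; rw [h10]; rw [h11]] <;>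
             simp only [show flipP (0,0) = (1,1) from rfl, show flipP (0,1) = (1,0) from rfl,
               show flipP (1,0) = (0,1) from rfl, show flipP (1,1) = (0,0) from rfl,
               dd, sg] <;> norm_num <;> (congr 1 ; push_cast ; ring1))
        | (refine ⟨θ₁, θ₀, fun j => ?_⟩
           rcases hmem j with rfl | rfl | rfl | rfl <;>
             [rw [hq]; rw [hr]; rw [h10]; rw [h11]] <;>
             simp only [show flipP (0,0) = (1,1) from rfl, show flipP (0,1) = (1,0) from rfl,
               show flipP (1,0) = (0,1) from rfl, show flipP (1,1) = (0,0) from rfl,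
               dd, sg] <;> norm_num <;> (congr 1 ; push_cast ; ring1))
        | (refine ⟨θ₀, -θ₁, fun j => ?_⟩
           rcases hmem j with rfl | rfl | rfl | rfl <;>
             [rw [hq]; rw [hr]; rw [h10]; rw [h11]] <;>
             simp only [show flipP (0,0) = (1,1) from rfl, show flipP (0,1) = (1,0) from rfl,
               show flipP (1,0) = (0,1) from rfl, show flipP (1,1) = (0,0) from rfl,
               dd, sg] <;> norm_num <;> (congr 1 ; push_cast ; ring1))
        | (refine ⟨θ₁, -θ₀, fun j => ?_⟩
           rcases hmem j with rfl | rfl | rfl | rfl <;>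
             [rw [hq]; rw [hr]; rw [h10]; rw [h11]] <;>
             simp only [show flipP (0,0) = (1,1) from rfl, show flipP (0,1) = (1,0) from rfl,
               show flipP (1,0) = (0,1) from rfl, show flipP (1,1) = (0,0) from rfl,
               dd, sg] <;> norm_num <;> (congr 1 ; push_cast ; ring1))
        | (refine ⟨-θ₀, θ₁, fun j => ?_⟩
           rcases hmem j with rfl | rfl | rfl | rfl <;>
             [rw [hq]; rw [hr]; rw [h10]; rw [h11]] <;>
             simp only [show flipP (0,0) = (1,1) from rfl, show flipP (0,1) = (1,0) from rfl,
               show flipP (1,0) = (0,1) from rfl, show flipP (1,1) = (0,0) from rfl,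
               dd, sg] <;> norm_num <;> (congr 1 ; push_cast ; ring1))
        | (refine ⟨-θ₁, θ₀, fun j => ?_⟩
           rcases hmem j with rfl | rfl | rfl | rfl <;>
             [rw [hq]; rw [hr]; rw [h10]; rw [h11]] <;>
             simp only [show flipP (0,0) = (1,1) from rfl, show flipP (0,1) = (1,0) from rfl,
               show flipP (1,0) = (0,1) from rfl, show flipP (1,1) = (0,0) from rfl,
               dd, sg] <;> norm_num <;> (congr 1 ; push_cast ; ring1))
        | (refine ⟨-θ₀, -θ₁, fun j => ?_⟩
           rcases hmem j with rfl | rfl | rfl | rfl <;>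
             [rw [hq]; rw [hr]; rw [h10]; rw [h11]] <;>
             simp only [show flipP (0,0) = (1,1) from rfl, show flipP (0,1) = (1,0) from rfl,
               show flipP (1,0) = (0,1) from rfl, show flipP (1,1) = (0,0) from rfl,
               dd, sg] <;> norm_num <;> (congr 1 ; push_cast ; ring1))
        | (refine ⟨-θ₁, -θ₀, fun j => ?_⟩
           rcases hmem j with rfl | rfl | rfl | rfl <;>
             [rw [hq]; rw [hr]; rw [h10]; rw [h11]] <;>
             simp only [show flipP (0,0) = (1,1) from rfl, show flipP (0,1) = (1,0) from rfl,
               show flipP (1,0) = (0,1) from rfl, show flipP (1,1) = (0,0) from rfl,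
               dd, sg] <;> norm_num <;> (congr 1 ; push_cast ; ring1))
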